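/- arXiv:2511.00168 — 3 statements merged into one kernel-verified Lean document; each statement's English description precedes it below -/
import Mathlib

section
/- Let M(s) = f0 + gᵀs + (1/2)sᵀHs + (β/6)‖s‖³ + (σ/4)‖s‖⁴ with σ ≥ 0, and suppose s* is a global minimizer of M over ℝⁿ. Then B(s*) s* = -g and B(s*) is positive semidefinite, where B(s) = H + (β/2)‖s‖ I + σ‖s‖² I. -/
open Matrix Polynomial

noncomputable def enormFin {n : ℕ} (s : Fin n → ℝ) : ℝ := Real.sqrt (s ⬝ᵥ s)

noncomputable def Mfun {n : ℕ} (f0 : ℝ) (g : Fin n → ℝ)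
    (H : Matrix (Fin n) (Fin n) ℝ) (β σ : ℝ) (s : Fin n → ℝ) : ℝ :=
  f0 + g ⬝ᵥ s + (1/2) * (s ⬝ᵥ (H *ᵥ s)) + (β/6) * enormFin s ^ 3 + (σ/4) * enormFin s ^ 4

noncomputable def Bmat {n : ℕ} (H : Matrix (Fin n) (Fin n) ℝ) (β σ : ℝ)
    (s : Fin n → ℝ) : Matrix (Fin n) (Fin n) ℝ :=
  H + ((β/2) * enormFin s) • (1 : Matrix (Fin n) (Fin n) ℝ)
    + (σ * enormFin s ^ 2) • (1 : Matrix (Fin n) (Fin n) ℝ)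

lemma l1 {a b c e : ℝ} (h : ∀ t : ℝ, 0 < t → 0 ≤ a + b*t + c*t^2 + e*t^3) : 0 ≤ a := by
  have hcont : Continuous fun t : ℝ => a + b*t + c*t^2 + e*t^3 := by continuity
  have ht : Filter.Tendsto (fun t : ℝ => a + b*t + c*t^2 + e*t^3)
      (nhdsWithin 0 (Set.Ioi 0)) (nhds a) := by
    have := (hcont.tendsto 0).mono_left (nhdsWithin_le_nhds (s := Set.Ioi (0:ℝ)))
    simpa using this
  exact ge_of_tendsto ht (by filter_upwards [self_mem_nhdsWithin] with t htt using h t htt)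

lemma dot_symm {n : ℕ} (A : Matrix (Fin n) (Fin n) ℝ) (hA : A.IsSymm) (v w : Fin n → ℝ) :
    v ⬝ᵥ (A *ᵥ w) = w ⬝ᵥ (A *ᵥ v) := by
  rw [dotProduct_mulVec, dotProduct_comm]
  congr 1
  rw [← hA, vecMul_transpose, hA]

lemma dot_self_nonneg' {n : ℕ} (v : Fin n → ℝ) : 0 ≤ v ⬝ᵥ v :=
  Finset.sum_nonneg fun i _ => mul_self_nonneg (v i)

lemma deriv_M {n : ℕ} (f0 : ℝ) (g : Fin n → ℝ) (H : Matrix (Fin n) (Fin n) ℝ)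
    (β σ : ℝ) (s d : Fin n → ℝ) (hs : s ⬝ᵥ s ≠ 0) :
    HasDerivAt (fun t : ℝ => Mfun f0 g H β σ (s + t • d))
      (g ⬝ᵥ d + (1/2) * (s ⬝ᵥ (H *ᵥ d) + d ⬝ᵥ (H *ᵥ s))
        + ((β/2) * enormFin s + σ * enormFin s ^ 2) * (s ⬝ᵥ d)) 0 := by
  have hq0 : (0:ℝ) < s ⬝ᵥ s := lt_of_le_of_ne (dot_self_nonneg' s) (Ne.symm hs)
  set qa := s ⬝ᵥ s with hqa
  set qb := s ⬝ᵥ d with hqb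
  set qc := d ⬝ᵥ d with hqc
  have hsqa : (0:ℝ) < Real.sqrt qa := Real.sqrt_pos.mpr hq0
  have hfun : (fun t : ℝ => Mfun f0 g H β σ (s + t • d)) =
      fun t : ℝ => ((f0 + g ⬝ᵥ s + (1/2) * (s ⬝ᵥ (H *ᵥ s)))
        + (g ⬝ᵥ d + (1/2) * (s ⬝ᵥ (H *ᵥ d) + d ⬝ᵥ (H *ᵥ s))) * t
        + ((1/2) * (d ⬝ᵥ (H *ᵥ d))) * t^2)
        + (β/6) * Real.sqrt (qa + 2*qb*t + qc*t^2) ^ 3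
        + (σ/4) * Real.sqrt (qa + 2*qb*t + qc*t^2) ^ 4 := by
    funext t
    have hdot : (s + t • d) ⬝ᵥ (s + t • d) = qa + 2*qb*t + qc*t^2 := by
      simp only [add_dotProduct, dotProduct_add, smul_dotProduct, dotProduct_smul, smul_eq_mul,
        dotProduct_comm d s, hqa, hqb, hqc]
      ring
    simp only [Mfun, enormFin, hdot]
    simp only [add_dotProduct, dotProduct_add, mulVec_add, mulVec_smul, smul_dotProduct,
      dotProduct_smul, smul_eq_mul]
    ring
  rw [hfun]
  have h1 : HasDerivAt (fun t : ℝ => t) 1 0 := hasDerivAt_id 0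
  have h2 : HasDerivAt (fun t : ℝ => t^2) (0:ℝ) 0 := by
    simpa using hasDerivAt_pow 2 (0:ℝ)
  have hq : HasDerivAt (fun t : ℝ => qa + 2*qb*t + qc*t^2) (2*qb) 0 := by
    simpa [Pi.add_def] using ((hasDerivAt_const (0:ℝ) qa).add (h1.const_mul (2*qb))).add (h2.const_mul qc)
  have hqz : (fun t : ℝ => qa + 2*qb*t + qc*t^2) 0 ≠ 0 := by simpa using hs
  have hsq : HasDerivAt (fun t : ℝ => Real.sqrt (qa + 2*qb*t + qc*t^2))
      ((2*qb) / (2 * Real.sqrt qa)) 0 := by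
    have := hq.sqrt hqz
    simpa using this
  have hsq3 := (hsq.pow 3).const_mul (β/6)
  have hsq4 := (hsq.pow 4).const_mul (σ/4)
  have hlin : HasDerivAt (fun t : ℝ =>
      (f0 + g ⬝ᵥ s + (1/2) * (s ⬝ᵥ (H *ᵥ s)))
        + (g ⬝ᵥ d + (1/2) * (s ⬝ᵥ (H *ᵥ d) + d ⬝ᵥ (H *ᵥ s))) * t
        + ((1/2) * (d ⬝ᵥ (H *ᵥ d))) * t^2)
      (g ⬝ᵥ d + (1/2) * (s ⬝ᵥ (H *ᵥ d) + d ⬝ᵥ (H *ᵥ s))) 0 := by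
    simpa [mul_comm, Pi.add_def] using
      ((hasDerivAt_const (0:ℝ) (f0 + g ⬝ᵥ s + (1/2) * (s ⬝ᵥ (H *ᵥ s)))).add
        (h1.const_mul (g ⬝ᵥ d + (1/2) * (s ⬝ᵥ (H *ᵥ d) + d ⬝ᵥ (H *ᵥ s))))).add
      (h2.const_mul ((1/2) * (d ⬝ᵥ (H *ᵥ d))))
  have htot := (hlin.add hsq3).add hsq4
  refine htot.congr_deriv (Eq.symm ?_)
  have hv : (fun t : ℝ => qa + 2*qb*t + qc*t^2) 0 = qa := by simp
  have hsq2 : Real.sqrt qa ^ 2 = qa := Real.sq_sqrt hq0.le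
  have e3 : Real.sqrt qa ^ 3 = qa * Real.sqrt qa := by rw [pow_succ, hsq2]
  have e4 : Real.sqrt qa ^ 4 = qa ^ 2 := by rw [show (4:ℕ) = 2*2 from rfl, pow_mul, hsq2]
  simp only [enormFin, ← hqa]
  norm_num
  rw [hsq2, e3]
  field_simp
  ring_nf
  linear_combination (6*β*qb) * hsq2

theorem stmt0 {n : ℕ} (f0 : ℝ) (g : Fin n → ℝ) (H : Matrix (Fin n) (Fin n) ℝ)
    (hH : H.IsSymm) (β σ : ℝ) (hσ : 0 ≤ σ) (sstar : Fin n → ℝ)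
    (hmin : ∀ s : Fin n → ℝ, Mfun f0 g H β σ sstar ≤ Mfun f0 g H β σ s) :
    (Bmat H β σ sstar) *ᵥ sstar = -g ∧ (Bmat H β σ sstar).PosSemidef := by
  have hBsymm : (Bmat H β σ sstar).IsSymm := by
    simp [Bmat, Matrix.IsSymm, transpose_add, transpose_smul, hH.eq]
  by_cases hs0 : sstar = 0
  · -- degenerate case s* = 0
    subst hs0
    have he : enormFin (0 : Fin n → ℝ) = 0 := by simp [enormFin]
    have hB : Bmat H β σ (0 : Fin n → ℝ) = H := by simp [Bmat, he]
    have hM0 : Mfun f0 g H β σ (0 : Fin n → ℝ) = f0 := by simp [Mfun, he]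
    have hMt : ∀ (d : Fin n → ℝ) (t : ℝ), 0 < t → Mfun f0 g H β σ (t • d) =
        f0 + (g ⬝ᵥ d) * t + ((1/2) * (d ⬝ᵥ (H *ᵥ d))) * t^2
          + ((β/6) * enormFin d ^ 3) * t^3 + ((σ/4) * enormFin d ^ 4) * t^4 := by
      intro d t ht
      have hd : enormFin (t • d) = t * enormFin d := by
        simp only [enormFin, smul_dotProduct, dotProduct_smul, smul_eq_mul]
        rw [show t * (t * (d ⬝ᵥ d)) = t^2 * (d ⬝ᵥ d) by ring,
          Real.sqrt_mul (sq_nonneg t), Real.sqrt_sq ht.le]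
      simp only [Mfun, hd, smul_dotProduct, dotProduct_smul, mulVec_smul, smul_eq_mul]
      ring
    have hg : ∀ d : Fin n → ℝ, 0 ≤ g ⬝ᵥ d := by
      intro d
      apply l1 (b := (1/2) * (d ⬝ᵥ (H *ᵥ d))) (c := (β/6) * enormFin d ^ 3)
        (e := (σ/4) * enormFin d ^ 4)
      intro t ht
      have h := hmin (t • d)
      rw [hM0, hMt d t ht] at h
      have h2 : 0 ≤ t * (g ⬝ᵥ d + (1/2) * (d ⬝ᵥ (H *ᵥ d)) * t
          + (β/6) * enormFin d ^ 3 * t^2 + (σ/4) * enormFin d ^ 4 * t^3) := by nlinarith [h]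
      have := nonneg_of_mul_nonneg_right h2 ht
      linarith [this]
    have hgz : g = 0 := by
      funext i
      have h1 := hg (Pi.single i 1)
      have h2 := hg (-(Pi.single i 1))
      simp only [dotProduct_neg] at h2
      have h3 : g ⬝ᵥ Pi.single i 1 = g i := by simp
      simp only [Pi.zero_apply]
      linarith [h1, h2, h3.symm ▸ h1]
    constructor
    · rw [hB, hgz]; simp
    · rw [hB]
      refine PosSemidef.of_dotProduct_mulVec_nonneg ?_ ?_
      · rw [Matrix.IsHermitian, conjTranspose_eq_transpose_of_trivial]; exact hH
      · intro x
        have : 0 ≤ x ⬝ᵥ (H *ᵥ x) := by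
          have key : 0 ≤ (1/2) * (x ⬝ᵥ (H *ᵥ x)) := by
            apply l1 (b := (β/6) * enormFin x ^ 3) (c := (σ/4) * enormFin x ^ 4) (e := 0)
            intro t ht
            have h := hmin (t • x)
            rw [hM0, hMt x t ht, hgz] at h
            simp only [zero_dotProduct, zero_mul] at h
            have h2 : 0 ≤ t^2 * ((1/2) * (x ⬝ᵥ (H *ᵥ x)) + (β/6) * enormFin x ^ 3 * t
                + (σ/4) * enormFin x ^ 4 * t^2) := by nlinarith [h]
            have := nonneg_of_mul_nonneg_right h2 (by positivity : (0:ℝ) < t^2)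
            linarith [this]
          linarith
        simpa using this
  · -- main case s* ≠ 0
    have hq0 : (0:ℝ) < sstar ⬝ᵥ sstar :=
      lt_of_le_of_ne (dot_self_nonneg' sstar)
        (fun h => hs0 (dotProduct_self_eq_zero.mp h.symm))
    set lam := (β/2) * enormFin sstar + σ * enormFin sstar ^ 2 with hlam
    have hfo : ∀ d : Fin n → ℝ,
        g ⬝ᵥ d + sstar ⬝ᵥ (H *ᵥ d) + lam * (sstar ⬝ᵥ d) = 0 := by
      intro d
      have hder := deriv_M f0 g H β σ sstar d hq0.ne'
      have hloc : IsLocalMin (fun t : ℝ => Mfun f0 g H β σ (sstar + t • d)) 0 :=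
        Filter.Eventually.of_forall fun t => by simpa using hmin (sstar + t • d)
      have hz := hloc.hasDerivAt_eq_zero hder
      rw [dot_symm H hH d sstar] at hz
      rw [← hlam] at hz
      linear_combination hz
    have hBv : ∀ v : Fin n → ℝ, Bmat H β σ sstar *ᵥ v = H *ᵥ v + lam • v := by
      intro v
      simp only [Bmat, add_mulVec, smul_mulVec, one_mulVec, hlam, add_smul]
      abel
    have hfo2 : Bmat H β σ sstar *ᵥ sstar = -g := by
      funext i
      have h := hfo (Pi.single i 1)
      have hsd : sstar ⬝ᵥ (H *ᵥ Pi.single i 1) = (H *ᵥ sstar) i := by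
        rw [dot_symm H hH]; simp
      have h1 : g ⬝ᵥ Pi.single i 1 = g i := by simp
      have h2 : sstar ⬝ᵥ Pi.single i 1 = sstar i := by simp
      rw [hBv]
      simp only [Pi.add_apply, Pi.smul_apply, smul_eq_mul, Pi.neg_apply]
      rw [hsd, h1, h2] at h
      linarith
    refine ⟨hfo2, ?_⟩
    have hgd : ∀ d : Fin n → ℝ, g ⬝ᵥ d = -(sstar ⬝ᵥ (H *ᵥ d)) - lam * (sstar ⬝ᵥ d) := by
      intro d; have := hfo d; linarith
    have key : ∀ s : Fin n → ℝ, s ⬝ᵥ s = sstar ⬝ᵥ sstar →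
        0 ≤ (s - sstar) ⬝ᵥ (Bmat H β σ sstar *ᵥ (s - sstar)) := by
      intro s hss
      have hen : enormFin s = enormFin sstar := by rw [enormFin, enormFin, hss]
      have hm := hmin s
      simp only [Mfun, hen] at hm
      -- hm : f0 + g⬝s* + ½ s*Hs* + cubic + quartic ≤ f0 + g⬝s + ½ sHs + cubic + quartic
      have hm2 : g ⬝ᵥ sstar + (1/2) * (sstar ⬝ᵥ (H *ᵥ sstar)) ≤
          g ⬝ᵥ s + (1/2) * (s ⬝ᵥ (H *ᵥ s)) := by linarith [hm]
      have hg1 := hgd (s - sstar)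
      have hg2 : g ⬝ᵥ (s - sstar) = g ⬝ᵥ s - g ⬝ᵥ sstar := dotProduct_sub g s sstar
      rw [hBv]
      have hsym : sstar ⬝ᵥ (H *ᵥ s) = s ⬝ᵥ (H *ᵥ sstar) := dot_symm H hH sstar s
      simp only [mulVec_sub, dotProduct_add, dotProduct_sub, sub_dotProduct,
        dotProduct_smul, smul_eq_mul, Pi.smul_apply, smul_sub] at *
      rw [dotProduct_comm sstar s] at *
      have hss2 : lam * (s ⬝ᵥ s) = lam * (sstar ⬝ᵥ sstar) := by rw [hss]
      linarith [hm2, hg1, hsym, hss2]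
    have hpos : ∀ u : Fin n → ℝ, sstar ⬝ᵥ u ≠ 0 →
        0 ≤ u ⬝ᵥ (Bmat H β σ sstar *ᵥ u) := by
      intro u hu
      have hu0 : u ≠ 0 := fun h => hu (by simp [h])
      have huu : (0:ℝ) < u ⬝ᵥ u :=
        lt_of_le_of_ne (dot_self_nonneg' u) (fun h => hu0 (dotProduct_self_eq_zero.mp h.symm))
      set t := -2 * (sstar ⬝ᵥ u) / (u ⬝ᵥ u) with hts
      have ht : t ≠ 0 := by
        rw [hts]
        exact div_ne_zero (by simpa using hu) huu.ne'
      have hss : (sstar + t • u) ⬝ᵥ (sstar + t • u) = sstar ⬝ᵥ sstar := by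
        simp only [add_dotProduct, dotProduct_add, smul_dotProduct, dotProduct_smul,
          smul_eq_mul, dotProduct_comm u sstar]
        rw [hts]
        field_simp
        ring
      have hk := key _ hss
      rw [add_sub_cancel_left] at hk
      rw [smul_dotProduct, mulVec_smul, dotProduct_smul, smul_eq_mul, smul_eq_mul] at hk
      have ht2 : (0:ℝ) < t * t := mul_self_pos.mpr ht
      have hk2 : 0 ≤ (t * t) * (u ⬝ᵥ (Bmat H β σ sstar *ᵥ u)) := by linarith [hk, (by ring : t * (t * (u ⬝ᵥ (Bmat H β σ sstar *ᵥ u))) = (t * t) * (u ⬝ᵥ (Bmat H β σ sstar *ᵥ u)))]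
      exact nonneg_of_mul_nonneg_right hk2 ht2
    refine PosSemidef.of_dotProduct_mulVec_nonneg ?_ ?_
    · rw [Matrix.IsHermitian, conjTranspose_eq_transpose_of_trivial]; exact hBsymm
    · intro v
      simp only [star_trivial]
      by_cases hv : sstar ⬝ᵥ v = 0
      · apply l1 (b := v ⬝ᵥ (Bmat H β σ sstar *ᵥ sstar) + sstar ⬝ᵥ (Bmat H β σ sstar *ᵥ v))
          (c := sstar ⬝ᵥ (Bmat H β σ sstar *ᵥ sstar)) (e := 0)
        intro ε hε
        have hne : sstar ⬝ᵥ (v + ε • sstar) ≠ 0 := by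
          rw [dotProduct_add, dotProduct_smul, hv, smul_eq_mul, zero_add]
          exact mul_ne_zero hε.ne' hq0.ne'
        have h := hpos (v + ε • sstar) hne
        simp only [dotProduct_add, add_dotProduct, mulVec_add, mulVec_smul,
          smul_dotProduct, dotProduct_smul, smul_eq_mul] at h
        ring_nf at h ⊢
        linarith [h]
      · exact hpos v hv
end

section
/- Let s* be a global minimizer of M(s) = f0 + gᵀs + (1/2)sᵀHs + (β/6)‖s‖³ + (σ/4)‖s‖⁴ with σ ≥ 0 and β + 3σ‖s*‖ ≥ 0. Then there exist a positive semidefinite symmetric (n+1)×(n+1) matrix X, a polynomial p of degree ≤ 2, and a polynomial q of degree ≤ 1 such that for all s ∈ ℝⁿ, M(s) - M(s*) = (1, s)ᵀ X (1, s) + p(‖s‖)² + ‖s‖ q(‖s‖)². -/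
open Matrix Polynomial
set_option maxHeartbeats 1000000

namespace SOSAux

lemma dps_nonneg {n : ℕ} (s : Fin n → ℝ) : 0 ≤ s ⬝ᵥ s :=
  Finset.sum_nonneg fun i _ => mul_self_nonneg _

lemma enorm_nonneg {n : ℕ} (s : Fin n → ℝ) : 0 ≤ enormFin s := Real.sqrt_nonneg _

lemma enorm_sq {n : ℕ} (s : Fin n → ℝ) : enormFin s ^ 2 = s ⬝ᵥ s :=
  Real.sq_sqrt (dps_nonneg s)

lemma enorm_eq_norm {n : ℕ} (s : Fin n → ℝ) :
    enormFin s = ‖(WithLp.equiv 2 (Fin n → ℝ)).symm s‖ := by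
  rw [EuclideanSpace.norm_eq]
  unfold enormFin dotProduct
  congr 1
  refine Finset.sum_congr rfl fun i _ => ?_
  rw [WithLp.equiv_symm_apply, WithLp.ofLp_toLp, Real.norm_eq_abs, sq_abs]
  ring

lemma enorm_sub_abs {n : ℕ} (a b : Fin n → ℝ) : |enormFin a - enormFin b| ≤ enormFin (a - b) := by
  rw [enorm_eq_norm, enorm_eq_norm, enorm_eq_norm, WithLp.equiv_symm_apply, WithLp.toLp_sub]
  exact abs_norm_sub_norm_le _ _

lemma enorm_smul {n : ℕ} {t : ℝ} (ht : 0 ≤ t) (w : Fin n → ℝ) :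
    enormFin (t • w) = t * enormFin w := by
  unfold enormFin
  rw [show (t • w) ⬝ᵥ (t • w) = t ^ 2 * (w ⬝ᵥ w) by
    simp [smul_dotProduct, dotProduct_smul, smul_eq_mul]; ring]
  rw [Real.sqrt_mul (sq_nonneg t), Real.sqrt_sq ht]

lemma aux_nonneg {x C : ℝ} (h : ∀ t : ℝ, 0 < t → t ≤ 1 → -(t * C) ≤ x) : 0 ≤ x := by
  by_contra hx
  push_neg at hx
  rcases le_or_gt C 0 with hC | hC
  · have := h 1 one_pos le_rfl; nlinarith
  · have ht1 : 0 < -x / (2 * C) := div_pos (by linarith) (by linarith)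
    have h1 : 0 < min 1 (-x / (2 * C)) := lt_min one_pos ht1
    have h2 := h _ h1 (min_le_left _ _)
    have h3 : min 1 (-x / (2 * C)) * (2 * C) ≤ -x := by
      rw [← le_div_iff₀ (by linarith)]
      exact min_le_right _ _
    linarith

lemma dot_mulVec_symm {n : ℕ} {A : Matrix (Fin n) (Fin n) ℝ} (hA : A.IsSymm)
    (x y : Fin n → ℝ) : x ⬝ᵥ (A *ᵥ y) = y ⬝ᵥ (A *ᵥ x) := by
  calc x ⬝ᵥ (A *ᵥ y) = (x ᵥ* A) ⬝ᵥ y := dotProduct_mulVec _ _ _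
    _ = (A *ᵥ x) ⬝ᵥ y := by rw [← vecMul_transpose, hA.eq]
    _ = y ⬝ᵥ (A *ᵥ x) := dotProduct_comm _ _

lemma expand {n : ℕ} (f0 : ℝ) (g : Fin n → ℝ) (H : Matrix (Fin n) (Fin n) ℝ)
    (hH : H.IsSymm) (β σ : ℝ) (sstar s : Fin n → ℝ) :
    Mfun f0 g H β σ s - Mfun f0 g H β σ sstar =
      (g + H *ᵥ sstar + ((β/2) * enormFin sstar + σ * enormFin sstar ^ 2) • sstar) ⬝ᵥ (s - sstar)
      + (1/2) * ((s - sstar) ⬝ᵥ (Bmat H β σ sstar *ᵥ (s - sstar)))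
      + ((σ/4) * (enormFin s ^ 4 - enormFin sstar ^ 4) + (β/6) * (enormFin s ^ 3 - enormFin sstar ^ 3)
         - (((β/2) * enormFin sstar + σ * enormFin sstar ^ 2)/2) * (enormFin s ^ 2 - enormFin sstar ^ 2)) := by
  have hsym := dot_mulVec_symm hH sstar s
  have hr2 : s ⬝ᵥ s = enormFin s ^ 2 := (enorm_sq s).symm
  have hrs2 : sstar ⬝ᵥ sstar = enormFin sstar ^ 2 := (enorm_sq sstar).symm
  have hcomm : sstar ⬝ᵥ s = s ⬝ᵥ sstar := dotProduct_comm _ _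
  have h1 : (H *ᵥ sstar) ⬝ᵥ s = s ⬝ᵥ (H *ᵥ sstar) := dotProduct_comm _ _
  have h2 : (H *ᵥ sstar) ⬝ᵥ sstar = sstar ⬝ᵥ (H *ᵥ sstar) := dotProduct_comm _ _
  simp only [Mfun, Bmat, add_mulVec, smul_mulVec, one_mulVec, mulVec_sub,
    dotProduct_sub, sub_dotProduct, dotProduct_add, add_dotProduct,
    dotProduct_smul, smul_dotProduct, smul_eq_mul, hsym, hcomm, h1, h2, hr2, hrs2]
  ring

lemma key0 {n : ℕ} (f0 : ℝ) (g : Fin n → ℝ) (H : Matrix (Fin n) (Fin n) ℝ)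
    (hH : H.IsSymm) (β σ : ℝ) (hσ : 0 ≤ σ) (sstar : Fin n → ℝ)
    (hmin : ∀ s : Fin n → ℝ, Mfun f0 g H β σ sstar ≤ Mfun f0 g H β σ s)
    (hβ : 0 ≤ β + 3 * σ * enormFin sstar) :
    g + H *ᵥ sstar + ((β/2) * enormFin sstar + σ * enormFin sstar ^ 2) • sstar = 0 := by
  set c := g + H *ᵥ sstar + ((β/2) * enormFin sstar + σ * enormFin sstar ^ 2) • sstar with hc
  have key : ∀ w : Fin n → ℝ, 0 ≤ c ⬝ᵥ w := by
    intro w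
    apply aux_nonneg (C := |1/2 * (w ⬝ᵥ (Bmat H β σ sstar *ᵥ w))|
      + enormFin w ^ 2 * (σ/4*(enormFin sstar + enormFin w)^2
          + (β + 3*σ*enormFin sstar)/6*(enormFin sstar + enormFin w)
          + enormFin sstar*(β + 3*σ*enormFin sstar)/12))
    intro t ht0 ht1
    have he := expand f0 g H hH β σ sstar (sstar + t • w)
    rw [add_sub_cancel_left, ← hc] at he
    have e1 : c ⬝ᵥ (t • w) = t * (c ⬝ᵥ w) := by
      simp [dotProduct_smul, smul_eq_mul]
    have e2 : (t • w) ⬝ᵥ (Bmat H β σ sstar *ᵥ (t • w))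
        = t^2 * (w ⬝ᵥ (Bmat H β σ sstar *ᵥ w)) := by
      rw [mulVec_smul]
      simp only [dotProduct_smul, smul_dotProduct, smul_eq_mul]
      ring
    rw [e1, e2] at he
    have hew : 0 ≤ enormFin w := enorm_nonneg w
    have hrs0 : 0 ≤ enormFin sstar := enorm_nonneg sstar
    have hes0 : 0 ≤ enormFin (sstar + t • w) := enorm_nonneg _
    have habs : |enormFin (sstar + t • w) - enormFin sstar| ≤ t * enormFin w := by
      have h := enorm_sub_abs (sstar + t • w) sstar
      rwa [add_sub_cancel_left, enorm_smul ht0.le] at h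
    have hr_le : enormFin (sstar + t • w) ≤ enormFin sstar + enormFin w := by
      have h1 := le_abs_self (enormFin (sstar + t • w) - enormFin sstar)
      nlinarith
    have hsq : (enormFin (sstar + t • w) - enormFin sstar)^2 ≤ t^2 * enormFin w^2 := by
      nlinarith [mul_le_mul habs habs (abs_nonneg (enormFin (sstar + t • w) - enormFin sstar))
          (by positivity : (0:ℝ) ≤ t * enormFin w),
        sq_abs (enormFin (sstar + t • w) - enormFin sstar)]
    have hQnn : 0 ≤ σ/4*(enormFin (sstar + t • w))^2
        + (β + 3*σ*enormFin sstar)/6*(enormFin (sstar + t • w))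
        + enormFin sstar*(β + 3*σ*enormFin sstar)/12 := by
      have t1 : 0 ≤ σ/4*(enormFin (sstar + t • w))^2 := by positivity
      have t2 : 0 ≤ (β + 3*σ*enormFin sstar)/6*(enormFin (sstar + t • w)) :=
        mul_nonneg (by linarith) hes0
      have t3 : 0 ≤ enormFin sstar*(β + 3*σ*enormFin sstar)/12 :=
        div_nonneg (mul_nonneg hrs0 hβ) (by norm_num)
      linarith
    have hQm : σ/4*(enormFin (sstar + t • w))^2
        + (β + 3*σ*enormFin sstar)/6*(enormFin (sstar + t • w))
        + enormFin sstar*(β + 3*σ*enormFin sstar)/12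
        ≤ σ/4*(enormFin sstar + enormFin w)^2
        + (β + 3*σ*enormFin sstar)/6*(enormFin sstar + enormFin w)
        + enormFin sstar*(β + 3*σ*enormFin sstar)/12 := by
      have hx : 0 ≤ σ * ((enormFin sstar + enormFin w)^2 - (enormFin (sstar + t • w))^2) :=
        mul_nonneg hσ (by nlinarith)
      have hy : 0 ≤ (β + 3*σ*enormFin sstar)/6 * ((enormFin sstar + enormFin w) - enormFin (sstar + t • w)) :=
        mul_nonneg (by linarith) (by linarith)
      nlinarith
    have hfac : (σ/4) * (enormFin (sstar + t • w) ^ 4 - enormFin sstar ^ 4)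
        + (β/6) * (enormFin (sstar + t • w) ^ 3 - enormFin sstar ^ 3)
        - (((β/2) * enormFin sstar + σ * enormFin sstar ^ 2)/2)
          * (enormFin (sstar + t • w) ^ 2 - enormFin sstar ^ 2)
        = (enormFin (sstar + t • w) - enormFin sstar)^2
          * (σ/4*(enormFin (sstar + t • w))^2
            + (β + 3*σ*enormFin sstar)/6*(enormFin (sstar + t • w))
            + enormFin sstar*(β + 3*σ*enormFin sstar)/12) := by
      ring
    rw [hfac] at he
    have hchain : (enormFin (sstar + t • w) - enormFin sstar)^2
          * (σ/4*(enormFin (sstar + t • w))^2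
            + (β + 3*σ*enormFin sstar)/6*(enormFin (sstar + t • w))
            + enormFin sstar*(β + 3*σ*enormFin sstar)/12)
        ≤ (t^2 * enormFin w^2) * (σ/4*(enormFin sstar + enormFin w)^2
            + (β + 3*σ*enormFin sstar)/6*(enormFin sstar + enormFin w)
            + enormFin sstar*(β + 3*σ*enormFin sstar)/12) := by
      calc _ ≤ (t^2 * enormFin w^2) * (σ/4*(enormFin (sstar + t • w))^2
            + (β + 3*σ*enormFin sstar)/6*(enormFin (sstar + t • w))
            + enormFin sstar*(β + 3*σ*enormFin sstar)/12) :=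
          mul_le_mul_of_nonneg_right hsq hQnn
        _ ≤ _ := mul_le_mul_of_nonneg_left hQm (by positivity)
    have hq : 1/2 * (t^2 * (w ⬝ᵥ (Bmat H β σ sstar *ᵥ w)))
        ≤ t^2 * |1/2 * (w ⬝ᵥ (Bmat H β σ sstar *ᵥ w))| := by
      have := mul_le_mul_of_nonneg_left
        (le_abs_self (1/2 * (w ⬝ᵥ (Bmat H β σ sstar *ᵥ w)))) (sq_nonneg t)
      nlinarith
    have hm := hmin (sstar + t • w)
    by_contra hcon
    push_neg at hcon
    have h5 := mul_lt_mul_of_pos_left hcon ht0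
    linarith [hm, he, hq, hchain, h5]
  have h1 := key (-c)
  have h2 : c ⬝ᵥ (-c) = -(c ⬝ᵥ c) := by simp
  have h3 : c ⬝ᵥ c = 0 := le_antisymm (by linarith) (dps_nonneg c)
  exact dotProduct_self_eq_zero.mp h3


lemma quadpos {n : ℕ} (f0 : ℝ) (g : Fin n → ℝ) (H : Matrix (Fin n) (Fin n) ℝ)
    (hH : H.IsSymm) (β σ : ℝ) (hσ : 0 ≤ σ) (sstar : Fin n → ℝ)
    (hmin : ∀ s : Fin n → ℝ, Mfun f0 g H β σ sstar ≤ Mfun f0 g H β σ s)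
    (hβ : 0 ≤ β + 3 * σ * enormFin sstar) :
    ∀ x : Fin n → ℝ, 0 ≤ x ⬝ᵥ (Bmat H β σ sstar *ᵥ x) := by
  have h0 := key0 f0 g H hH β σ hσ sstar hmin hβ
  have hBsymm : (Bmat H β σ sstar).IsSymm := by
    show _ᵀ = _
    simp [Bmat, transpose_add, transpose_smul, transpose_one, hH.eq]
  have key : ∀ s : Fin n → ℝ, 0 ≤ 1/2 * ((s - sstar) ⬝ᵥ (Bmat H β σ sstar *ᵥ (s - sstar)))
      + ((σ/4) * (enormFin s ^ 4 - enormFin sstar ^ 4) + (β/6) * (enormFin s ^ 3 - enormFin sstar ^ 3)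
         - (((β/2) * enormFin sstar + σ * enormFin sstar ^ 2)/2) * (enormFin s ^ 2 - enormFin sstar ^ 2)) := by
    intro s
    have he := expand f0 g H hH β σ sstar s
    rw [h0, zero_dotProduct] at he
    linarith [hmin s]
  have stepA : ∀ w : Fin n → ℝ, sstar ⬝ᵥ w ≠ 0 → 0 ≤ w ⬝ᵥ (Bmat H β σ sstar *ᵥ w) := by
    intro w hD
    have hw0 : w ⬝ᵥ w ≠ 0 := by
      intro h
      exact hD (by rw [dotProduct_self_eq_zero.mp h]; simp)
    have hW : 0 < w ⬝ᵥ w := lt_of_le_of_ne (dps_nonneg w) (Ne.symm hw0)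
    set α : ℝ := -2*(sstar ⬝ᵥ w)/(w ⬝ᵥ w) with hα
    have hαne : α ≠ 0 := div_ne_zero (mul_ne_zero (by norm_num) hD) hw0
    have hαW : α * (w ⬝ᵥ w) = -2*(sstar ⬝ᵥ w) := by
      rw [hα]; field_simp
    have hcw : w ⬝ᵥ sstar = sstar ⬝ᵥ w := dotProduct_comm _ _
    have hsdot : (sstar + α • w) ⬝ᵥ (sstar + α • w) = sstar ⬝ᵥ sstar := by
      simp only [dotProduct_add, add_dotProduct, dotProduct_smul, smul_dotProduct,
        smul_eq_mul, hcw]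
      linear_combination α * hαW
    have hnorm : enormFin (sstar + α • w) = enormFin sstar := by unfold enormFin; rw [hsdot]
    have hk := key (sstar + α • w)
    rw [add_sub_cancel_left, hnorm] at hk
    have e2 : (α • w) ⬝ᵥ (Bmat H β σ sstar *ᵥ (α • w))
        = α^2 * (w ⬝ᵥ (Bmat H β σ sstar *ᵥ w)) := by
      rw [mulVec_smul]
      simp only [dotProduct_smul, smul_dotProduct, smul_eq_mul]
      ring
    rw [e2] at hk
    by_contra hF
    push_neg at hF
    nlinarith [mul_pos (by positivity : (0:ℝ) < α^2) (neg_pos.mpr hF), hk]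
  intro x
  by_cases hxs : sstar ⬝ᵥ x = 0
  swap
  · exact stepA x hxs
  by_cases hs0 : sstar = 0
  · subst hs0
    have hrs : enormFin (0 : Fin n → ℝ) = 0 := by simp [enormFin]
    have hx2 : 0 ≤ enormFin x := enorm_nonneg x
    apply aux_nonneg (C := σ/2 * enormFin x^4 + |β|/3 * enormFin x^3)
    intro t ht0 ht1
    have hk := key (t • x)
    rw [sub_zero, enorm_smul ht0.le, hrs] at hk
    have e2 : (t • x) ⬝ᵥ (Bmat H β σ 0 *ᵥ (t • x))
        = t^2 * (x ⬝ᵥ (Bmat H β σ 0 *ᵥ x)) := by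
      rw [mulVec_smul]
      simp only [dotProduct_smul, smul_dotProduct, smul_eq_mul]
      ring
    rw [e2] at hk
    have h1 : 0 ≤ 1/2 * (x ⬝ᵥ (Bmat H β σ 0 *ᵥ x)) + σ/4*t^2*enormFin x^4 + β/6*t*enormFin x^3 := by
      by_contra hcon
      push_neg at hcon
      have h6 := mul_neg_of_pos_of_neg (mul_pos ht0 ht0) hcon
      nlinarith [hk, h6]
    have hb1 : 0 ≤ σ*enormFin x^4*(t - t^2) :=
      mul_nonneg (mul_nonneg hσ (pow_nonneg hx2 4)) (by nlinarith)
    have hb2 : β * (t * enormFin x^3) ≤ |β| * (t * enormFin x^3) :=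
      mul_le_mul_of_nonneg_right (le_abs_self β)
        (mul_nonneg ht0.le (pow_nonneg hx2 3))
    linarith [h1, hb1, hb2]
  · have hA : 0 < sstar ⬝ᵥ sstar :=
      lt_of_le_of_ne (dps_nonneg _) (Ne.symm (fun h => hs0 (dotProduct_self_eq_zero.mp h)))
    have hsymB := dot_mulVec_symm hBsymm
    have hexpF : ∀ e : ℝ, (x + e • sstar) ⬝ᵥ (Bmat H β σ sstar *ᵥ (x + e • sstar))
        = x ⬝ᵥ (Bmat H β σ sstar *ᵥ x) + 2*e*(x ⬝ᵥ (Bmat H β σ sstar *ᵥ sstar))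
          + e^2*(sstar ⬝ᵥ (Bmat H β σ sstar *ᵥ sstar)) := by
      intro e
      simp only [mulVec_add, mulVec_smul, dotProduct_add, add_dotProduct, dotProduct_smul,
        smul_dotProduct, smul_eq_mul, hsymB sstar x]
      ring
    have hnz : ∀ t : ℝ, t ≠ 0 → sstar ⬝ᵥ (x + t • sstar) ≠ 0 := by
      intro t ht
      simp only [dotProduct_add, dotProduct_smul, smul_eq_mul, hxs, zero_add]
      exact mul_ne_zero ht hA.ne'
    have habs1 : ∀ t : ℝ, 0 < t → t ≤ 1 →
        t^2*(sstar ⬝ᵥ (Bmat H β σ sstar *ᵥ sstar))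
          ≤ t* |sstar ⬝ᵥ (Bmat H β σ sstar *ᵥ sstar)| := by
      intro t ht0 ht1
      have e1 : t^2*(sstar ⬝ᵥ (Bmat H β σ sstar *ᵥ sstar))
          ≤ t^2* |sstar ⬝ᵥ (Bmat H β σ sstar *ᵥ sstar)| :=
        mul_le_mul_of_nonneg_left (le_abs_self _) (sq_nonneg t)
      have e2 : t^2* |sstar ⬝ᵥ (Bmat H β σ sstar *ᵥ sstar)|
          ≤ t* |sstar ⬝ᵥ (Bmat H β σ sstar *ᵥ sstar)| := by
        have : t^2 ≤ t := by nlinarith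
        exact mul_le_mul_of_nonneg_right this (abs_nonneg _)
      linarith
    apply aux_nonneg (C := 2* |x ⬝ᵥ (Bmat H β σ sstar *ᵥ sstar)|
      + |sstar ⬝ᵥ (Bmat H β σ sstar *ᵥ sstar)|)
    intro t ht0 ht1
    rcases le_or_gt 0 (x ⬝ᵥ (Bmat H β σ sstar *ᵥ sstar)) with hG | hG
    · have hs := stepA (x + (-t) • sstar) (hnz (-t) (by simpa using ht0.ne'))
      rw [hexpF (-t)] at hs
      have e2 : 0 ≤ 2*t*(x ⬝ᵥ (Bmat H β σ sstar *ᵥ sstar)) :=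
        mul_nonneg (mul_nonneg (by norm_num) ht0.le) hG
      have e3 := habs1 t ht0 ht1
      have e4 := abs_nonneg (x ⬝ᵥ (Bmat H β σ sstar *ᵥ sstar))
      nlinarith [hs, e2, e3, e4]
    · have hs := stepA (x + t • sstar) (hnz t ht0.ne')
      rw [hexpF t] at hs
      have e2 : 2*t*(x ⬝ᵥ (Bmat H β σ sstar *ᵥ sstar)) = -(2*t* |x ⬝ᵥ (Bmat H β σ sstar *ᵥ sstar)|) := by
        rw [abs_of_neg hG]; ring
      have e3 := habs1 t ht0 ht1
      have e5 : 2*t* |x ⬝ᵥ (Bmat H β σ sstar *ᵥ sstar)| ≤ 2*t* |x ⬝ᵥ (Bmat H β σ sstar *ᵥ sstar)| := le_rfl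
      nlinarith [hs, e2, e3]

end SOSAux

theorem stmt12 {n : ℕ} (f0 : ℝ) (g : Fin n → ℝ) (H : Matrix (Fin n) (Fin n) ℝ)
    (hH : H.IsSymm) (β σ : ℝ) (hσ : 0 ≤ σ) (sstar : Fin n → ℝ)
    (hmin : ∀ s : Fin n → ℝ, Mfun f0 g H β σ sstar ≤ Mfun f0 g H β σ s)
    (hβ : 0 ≤ β + 3 * σ * enormFin sstar) :
    ∃ (X : Matrix (Fin (n+1)) (Fin (n+1)) ℝ) (p q : Polynomial ℝ),
      X.IsSymm ∧ X.PosSemidef ∧ p.degree ≤ 2 ∧ q.degree ≤ 1 ∧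
      ∀ s : Fin n → ℝ,
        Mfun f0 g H β σ s - Mfun f0 g H β σ sstar =
          (Fin.cons 1 s) ⬝ᵥ (X *ᵥ (Fin.cons 1 s))
            + (p.eval (enormFin s))^2 + enormFin s * (q.eval (enormFin s))^2 := by
  classical
  have h0 := SOSAux.key0 f0 g H hH β σ hσ sstar hmin hβ
  have hquad := SOSAux.quadpos f0 g H hH β σ hσ sstar hmin hβ
  have hBsymm : (Bmat H β σ sstar).IsSymm := by
    show _ᵀ = _
    simp [Bmat, transpose_add, transpose_smul, transpose_one, hH.eq]
  have hBherm : (Bmat H β σ sstar).IsHermitian := by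
    show _ᴴ = _
    rw [conjTranspose_eq_transpose_of_trivial]
    exact hBsymm
  have hBpsd : (Bmat H β σ sstar).PosSemidef := by
    refine Matrix.PosSemidef.of_dotProduct_mulVec_nonneg hBherm fun x => ?_
    have hsx : star x = x := by
      funext i; exact star_trivial _
    rw [hsx]; exact hquad x
  set κ : ℝ := (Real.sqrt 2)⁻¹ with hκ
  have hκ2 : κ * κ = 1/2 := by
    rw [hκ, ← mul_inv, Real.mul_self_sqrt (by norm_num : (0:ℝ) ≤ 2)]
    norm_num
  set Cm : Matrix (Fin n) (Fin (n+1)) ℝ :=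
    Matrix.of fun i j => (Fin.cons (-(κ * sstar i)) (fun k => if k = i then κ else 0) : Fin (n+1) → ℝ) j with hCm
  have hCv : ∀ s : Fin n → ℝ, Cm *ᵥ (Fin.cons 1 s) = κ • (s - sstar) := by
    intro s; funext i
    rw [hCm]
    simp only [Matrix.mulVec, dotProduct, Matrix.of_apply, Fin.sum_univ_succ,
      Fin.cons_zero, Fin.cons_succ, ite_mul, zero_mul, Pi.smul_apply, Pi.sub_apply,
      smul_eq_mul, Finset.sum_ite_eq', Finset.mem_univ, if_true]
    ring
  -- square roots
  have hc0nn : 0 ≤ enormFin sstar * (β + 3*σ*enormFin sstar)/12 :=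
    div_nonneg (mul_nonneg (SOSAux.enorm_nonneg sstar) hβ) (by norm_num)
  set u : ℝ := Real.sqrt σ with hu'
  set v : ℝ := Real.sqrt (enormFin sstar * (β + 3*σ*enormFin sstar)/12) with hv'
  have huv : 0 ≤ (β + 3*σ*enormFin sstar)/6 + u*v :=
    add_nonneg (div_nonneg hβ (by norm_num))
      (mul_nonneg (Real.sqrt_nonneg _) (Real.sqrt_nonneg _))
  set wq : ℝ := Real.sqrt ((β + 3*σ*enormFin sstar)/6 + u*v) with hw'
  have hu : u*u = σ := Real.mul_self_sqrt hσ
  have hv : v*v = enormFin sstar * (β + 3*σ*enormFin sstar)/12 := Real.mul_self_sqrt hc0nn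
  have hw : wq*wq = (β + 3*σ*enormFin sstar)/6 + u*v := Real.mul_self_sqrt huv
  refine ⟨Cmᴴ * Bmat H β σ sstar * Cm,
    Polynomial.C (u/2) * Polynomial.X^2 + Polynomial.C (-(u/2*enormFin sstar + v)) * Polynomial.X
      + Polynomial.C (v*enormFin sstar),
    Polynomial.C wq * Polynomial.X + Polynomial.C (-(wq*enormFin sstar)),
    ?_, ?_, ?_, ?_, ?_⟩
  · -- IsSymm
    rw [Matrix.IsSymm, ← conjTranspose_eq_transpose_of_trivial]
    exact (hBpsd.conjTranspose_mul_mul_same Cm).isHermitian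
  · exact hBpsd.conjTranspose_mul_mul_same Cm
  · exact Polynomial.degree_quadratic_le
  · exact Polynomial.degree_linear_le
  · intro s
    have he := SOSAux.expand f0 g H hH β σ sstar s
    rw [h0, zero_dotProduct, zero_add] at he
    rw [he]
    have hquadform : (Fin.cons 1 s) ⬝ᵥ ((Cmᴴ * Bmat H β σ sstar * Cm) *ᵥ (Fin.cons 1 s))
        = 1/2 * ((s - sstar) ⬝ᵥ (Bmat H β σ sstar *ᵥ (s - sstar))) := by
      rw [← mulVec_mulVec, ← mulVec_mulVec, conjTranspose_eq_transpose_of_trivial,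
        dotProduct_mulVec, vecMul_transpose, hCv s, mulVec_smul]
      simp only [dotProduct_smul, smul_dotProduct, smul_eq_mul]
      linear_combination ((s - sstar) ⬝ᵥ (Bmat H β σ sstar *ᵥ (s - sstar))) * hκ2
    rw [hquadform]
    simp only [eval_add, eval_mul, eval_pow, eval_C, eval_X]
    linear_combination (-((enormFin s - enormFin sstar)^2/4*(enormFin s)^2)) * hu
      + (-((enormFin s - enormFin sstar)^2)) * hv
      + (-((enormFin s - enormFin sstar)^2*(enormFin s))) * hw
end

section
/- A univariate polynomial p(z) = p₀ + p₁z + p₂z² + p₃z³ + p₄z⁴ is a sum of squares of polynomials if and only if there exists t ∈ ℝ such that the 3×3 matrix [[p₀, p₁/2, t],[p₁/2, p₂ - 2t, p₃/2],[t, p₃/2, p₄]] is positive semidefinite. -/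
open Polynomial Matrix

lemma sq_expand17 (a b c : ℝ) :
    (C a + C b * X + C c * X ^ 2) ^ 2 =
      monomial 0 (a*a) + monomial 1 (2*a*b) + monomial 2 (b*b + 2*a*c)
        + monomial 3 (2*b*c) + monomial 4 (c*c) := by
  simp only [← C_mul_X_pow_eq_monomial, map_add, _root_.map_mul, map_pow, map_ofNat]
  ring

lemma eq_of_deg2_17 (g : Polynomial ℝ) (h : g.natDegree ≤ 2) :
    g = C (g.coeff 0) + C (g.coeff 1) * X + C (g.coeff 2) * X ^ 2 := by
  conv_lhs => rw [g.as_sum_range' 3 (by omega)]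
  simp [Finset.sum_range_succ, ← C_mul_X_pow_eq_monomial]

lemma deg17 {k : ℕ} (p0 p1 p2 p3 p4 : ℝ) (f : Fin k → Polynomial ℝ)
    (hp : Polynomial.C p0 + Polynomial.C p1 * Polynomial.X
          + Polynomial.C p2 * Polynomial.X ^ 2
          + Polynomial.C p3 * Polynomial.X ^ 3
          + Polynomial.C p4 * Polynomial.X ^ 4
        = ∑ i : Fin k, (f i)^2) : ∀ i, (f i).natDegree ≤ 2 := by
  by_contra hc
  push_neg at hc
  obtain ⟨i0, hi0⟩ := hc
  set d := Finset.univ.sup (fun i => (f i).natDegree) with hd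
  have hd3 : 3 ≤ d := lt_of_lt_of_le hi0
    (Finset.le_sup (f := fun i => (f i).natDegree) (Finset.mem_univ i0))
  obtain ⟨j, -, hj⟩ := Finset.exists_mem_eq_sup Finset.univ ⟨i0, Finset.mem_univ i0⟩
    (fun i => (f i).natDegree)
  have hj' : (f j).natDegree = d := hj.symm
  have hco : (Polynomial.C p0 + Polynomial.C p1 * Polynomial.X
          + Polynomial.C p2 * Polynomial.X ^ 2
          + Polynomial.C p3 * Polynomial.X ^ 3
          + Polynomial.C p4 * Polynomial.X ^ 4).coeff (2*d) = 0 := by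
    simp [coeff_add, coeff_C_mul, coeff_X_pow, coeff_C, coeff_X,
      show ¬(2*d = 0) by omega, show ¬(1 = 2*d) by omega, show ¬(2*d = 2) by omega,
      show ¬(2*d = 3) by omega, show ¬(2*d = 4) by omega]
  have hsum : ∑ i : Fin k, ((f i)^2).coeff (2*d) = 0 := by
    rw [← finset_sum_coeff, ← hp]; exact hco
  have hnn : ∀ i ∈ Finset.univ, 0 ≤ ((f i)^2).coeff (2*d) := by
    intro i _
    rcases eq_or_lt_of_le (Finset.le_sup (f := fun i => (f i).natDegree)
      (Finset.mem_univ i)) with he | hlt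
    · replace he : (f i).natDegree = d := he
      have : ((f i)^2).coeff (2*d) = (f i).leadingCoeff^2 := by
        rw [pow_two, show 2*d = (f i).natDegree + (f i).natDegree by omega,
          coeff_mul_degree_add_degree, ← pow_two]
      rw [this]; positivity
    · replace hlt : (f i).natDegree < d := hlt
      have : ((f i)^2).coeff (2*d) = 0 :=
        coeff_eq_zero_of_natDegree_lt (lt_of_le_of_lt natDegree_pow_le (by omega))
      rw [this]
  have hall := (Finset.sum_eq_zero_iff_of_nonneg hnn).mp hsum
  have hj2 : ((f j)^2).coeff (2*d) = 0 := hall j (Finset.mem_univ j)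
  have hlc : (f j).leadingCoeff * (f j).leadingCoeff = 0 := by
    rw [← coeff_mul_degree_add_degree, ← pow_two,
      show (f j).natDegree + (f j).natDegree = 2*d by omega, hj2]
  have hz : f j = 0 := leadingCoeff_eq_zero.mp (mul_self_eq_zero.mp hlc)
  rw [hz, natDegree_zero] at hj'
  omega

theorem stmt17 (p0 p1 p2 p3 p4 : ℝ) :
    (∃ (k : ℕ) (f : Fin k → Polynomial ℝ),
      Polynomial.C p0 + Polynomial.C p1 * Polynomial.X
          + Polynomial.C p2 * Polynomial.X ^ 2
          + Polynomial.C p3 * Polynomial.X ^ 3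
          + Polynomial.C p4 * Polynomial.X ^ 4
        = ∑ i : Fin k, (f i)^2)
    ↔ ∃ t : ℝ, (Matrix.of ![![p0, p1/2, t], ![p1/2, p2 - 2*t, p3/2],
        ![t, p3/2, p4]]).PosSemidef := by
  constructor
  · rintro ⟨k, f, hp⟩
    have hdeg := deg17 p0 p1 p2 p3 p4 f hp
    set a : Fin k → ℝ := fun i => (f i).coeff 0 with ha
    set b : Fin k → ℝ := fun i => (f i).coeff 1 with hb
    set c : Fin k → ℝ := fun i => (f i).coeff 2 with hc
    have hf : ∀ i, f i = C (a i) + C (b i) * X + C (c i) * X^2 :=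
      fun i => eq_of_deg2_17 _ (hdeg i)
    have hp' : Polynomial.C p0 + Polynomial.C p1 * Polynomial.X
          + Polynomial.C p2 * Polynomial.X ^ 2
          + Polynomial.C p3 * Polynomial.X ^ 3
          + Polynomial.C p4 * Polynomial.X ^ 4
        = ∑ i : Fin k, (C (a i) + C (b i) * X + C (c i) * X^2)^2 := by
      rw [hp]; exact Finset.sum_congr rfl fun i _ => by rw [hf i]
    simp only [sq_expand17] at hp'
    have e0 : p0 = ∑ i, a i * a i := by
      have := congrArg (fun q => q.coeff 0) hp'
      simpa [finset_sum_coeff, coeff_add, coeff_C_mul, coeff_X_pow, coeff_C, coeff_X,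
        coeff_monomial] using this
    have e1 : p1 = ∑ i, 2 * a i * b i := by
      have := congrArg (fun q => q.coeff 1) hp'
      simpa [finset_sum_coeff, coeff_add, coeff_C_mul, coeff_X_pow, coeff_C, coeff_X,
        coeff_monomial] using this
    have e2 : p2 = ∑ i, (b i * b i + 2 * a i * c i) := by
      have := congrArg (fun q => q.coeff 2) hp'
      simpa [finset_sum_coeff, coeff_add, coeff_C_mul, coeff_X_pow, coeff_C, coeff_X,
        coeff_monomial] using this
    have e3 : p3 = ∑ i, 2 * b i * c i := by
      have := congrArg (fun q => q.coeff 3) hp'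
      simpa [finset_sum_coeff, coeff_add, coeff_C_mul, coeff_X_pow, coeff_C, coeff_X,
        coeff_monomial] using this
    have e4 : p4 = ∑ i, c i * c i := by
      have := congrArg (fun q => q.coeff 4) hp'
      simpa [finset_sum_coeff, coeff_add, coeff_C_mul, coeff_X_pow, coeff_C, coeff_X,
        coeff_monomial] using this
    refine ⟨∑ i, a i * c i, Matrix.posSemidef_iff_dotProduct_mulVec.mpr ⟨?_, ?_⟩⟩
    · ext i j
      fin_cases i <;> fin_cases j <;>
        simp [Matrix.conjTranspose_apply]
    · intro x
      have hx : (star x) ⬝ᵥ ((Matrix.of ![![p0, p1/2, ∑ i, a i * c i],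
          ![p1/2, p2 - 2*(∑ i, a i * c i), p3/2], ![∑ i, a i * c i, p3/2, p4]]) *ᵥ x)
          = ∑ i, (a i * x 0 + b i * x 1 + c i * x 2)^2 := by
        simp only [dotProduct, Matrix.mulVec, Fin.sum_univ_three, Matrix.of_apply,
          Matrix.cons_val', Matrix.cons_val_zero, Matrix.cons_val_one, Matrix.head_cons,
          Matrix.head_fin_const, Matrix.cons_val_two, Matrix.tail_cons, star_trivial,
          RCLike.star_def, starRingEnd_apply]
        rw [e0, e1, e2, e3, e4]
        simp only [mul_add, add_mul, Finset.sum_div, Finset.sum_mul, Finset.mul_sum,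
          Finset.sum_sub_distrib, ← Finset.sum_add_distrib, ← Finset.sum_sub_distrib]
        refine Finset.sum_congr rfl fun i _ => by ring
      rw [hx]
      exact Finset.sum_nonneg fun i _ => sq_nonneg _
  · rintro ⟨t, hM⟩
    obtain ⟨B, hB⟩ : ∃ B : Matrix (Fin 3) (Fin 3) ℝ, Matrix.of ![![p0, p1/2, t], ![p1/2, p2 - 2*t, p3/2],
        ![t, p3/2, p4]] = Bᴴ * B := by
      classical
      open scoped MatrixOrder in
      obtain ⟨X, hX, -, hXA⟩ :=
        CFC.exists_sqrt_of_isSelfAdjoint_of_quasispectrumRestricts hM.isHermitian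
          (QuasispectrumRestricts.nnreal_of_nonneg hM.nonneg)
      exact ⟨X, by rw [show Xᴴ = X from hX.star_eq]; exact hXA.symm⟩
    have ent : ∀ i j : Fin 3, (Matrix.of ![![p0, p1/2, t], ![p1/2, p2 - 2*t, p3/2],
        ![t, p3/2, p4]]) i j = B 0 i * B 0 j + B 1 i * B 1 j + B 2 i * B 2 j := by
      intro i j
      rw [hB]
      simp [Matrix.mul_apply, Matrix.conjTranspose_apply, Fin.sum_univ_three, mul_comm]
    have h00 := ent 0 0
    have h01 := ent 0 1
    have h02 := ent 0 2
    have h11 := ent 1 1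
    have h12 := ent 1 2
    have h22 := ent 2 2
    simp only [Matrix.of_apply, Matrix.cons_val', Matrix.cons_val_zero, Matrix.cons_val_one,
      Matrix.head_cons, Matrix.cons_val_two, Matrix.tail_cons, Matrix.head_fin_const,
      Matrix.empty_val'] at h00 h01 h02 h11 h12 h22
    refine ⟨3, fun j => C (B j 0) + C (B j 1) * X + C (B j 2) * X^2, ?_⟩
    rw [Fin.sum_univ_three, sq_expand17, sq_expand17, sq_expand17]
    simp only [← C_mul_X_pow_eq_monomial]
    rw [show p0 = B 0 0 * B 0 0 + B 1 0 * B 1 0 + B 2 0 * B 2 0 by linarith,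
      show p1 = 2*(B 0 0 * B 0 1 + B 1 0 * B 1 1 + B 2 0 * B 2 1) by linarith,
      show p2 = (B 0 1 * B 0 1 + B 1 1 * B 1 1 + B 2 1 * B 2 1)
        + 2*(B 0 0 * B 0 2 + B 1 0 * B 1 2 + B 2 0 * B 2 2) by linarith,
      show p3 = 2*(B 0 1 * B 0 2 + B 1 1 * B 1 2 + B 2 1 * B 2 2) by linarith,
      show p4 = B 0 2 * B 0 2 + B 1 2 * B 1 2 + B 2 2 * B 2 2 by linarith]
    simp only [map_add, _root_.map_mul, map_pow, map_ofNat]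
    ring
end
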